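/- Let M be the set of 2×2 integer matrices over ℤ_{√n} with odd determinant, and let v ∈ [√n]² be nonzero, where √n is a power of 2. Then for M chosen uniformly from 𝓜, Pr[ Mv ∈ [−C, C]² (mod √n) ] ≤ O(C²/n). More precisely, if g = gcd-power-of-2 of v (the largest power of 2 dividing both coordinates), then Mv is uniform on S = {u ∈ [√n]² : largest power of 2 dividing both coordinates of u is g}, |S ∩ [−C,C]²| ≤ 8(C/g)², |S| = (3/4)n/g², and the probability is at most (32/3)·C²/n. -/

import Mathlib

open Finset

namespace Stmt14


lemma card_range_filter_dvd (d m : ℕ) (hd : 0 < d) :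
    ((Finset.range (d * m)).filter (fun n => d ∣ n)).card = m := by
  have h : (Finset.range (d * m)).filter (fun n => d ∣ n)
      = (Finset.range m).image (fun j => d * j) := by
    ext n
    simp only [mem_filter, mem_range, mem_image]
    constructor
    · rintro ⟨hn, j, rfl⟩
      exact ⟨j, (Nat.mul_lt_mul_left hd).mp hn, rfl⟩
    · rintro ⟨j, hj, rfl⟩
      exact ⟨(Nat.mul_lt_mul_left hd).mpr hj, ⟨j, rfl⟩⟩
  rw [h, Finset.card_image_of_injective _ (fun a b h => Nat.eq_of_mul_eq_mul_left hd h),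
    Finset.card_range]

lemma card_filter_zmod (w : ℕ) (p : ZMod (2^w) → Prop) [DecidablePred p] :
    (Finset.univ.filter p).card
      = ((Finset.range (2^w)).filter (fun n => p ((n : ℕ) : ZMod (2^w)))).card := by
  haveI : NeZero (2^w) := ⟨by positivity⟩
  apply Finset.card_nbij (i := ZMod.val)
  · intro x hx
    simp only [mem_coe, mem_filter, mem_range] at *
    exact ⟨ZMod.val_lt x, by rw [ZMod.natCast_zmod_val]; exact hx.2⟩
  · intro x _ y _ h
    exact ZMod.val_injective _ h
  · intro n hn
    simp only [coe_filter, mem_range, Set.mem_setOf_eq, mem_coe, mem_filter, mem_univ,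
      true_and] at *
    exact ⟨(n : ZMod (2^w)), hn.2, ZMod.val_cast_of_lt hn.1⟩

lemma isUnit_cast_iff (w : ℕ) (hw : 1 ≤ w) (n : ℕ) :
    IsUnit ((n : ℕ) : ZMod (2^w)) ↔ ¬ 2 ∣ n := by
  rw [ZMod.isUnit_iff_coprime, Nat.coprime_pow_right_iff hw, Nat.coprime_comm,
    Nat.Prime.coprime_iff_not_dvd Nat.prime_two]

lemma card_units_zmod (w : ℕ) (hw : 1 ≤ w) :
    (Finset.univ.filter (fun x : ZMod (2^w) => IsUnit x)).card = 2^(w-1) := by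
  rw [card_filter_zmod]
  have hsplit := Finset.card_filter_add_card_filter_not
    (s := Finset.range (2^w)) (p := fun n => 2 ∣ n)
  have h2 : ((Finset.range (2^w)).filter (fun n => 2 ∣ n)).card = 2^(w-1) := by
    have hpow : 2 * 2^(w-1) = 2^w := by
      rw [← pow_succ']
      congr 1
      omega
    rw [← hpow]
    exact card_range_filter_dvd 2 (2^(w-1)) (by norm_num)
  have hcongr : (Finset.range (2^w)).filter (fun n => IsUnit ((n : ℕ) : ZMod (2^w)))
      = (Finset.range (2^w)).filter (fun n => ¬ 2 ∣ n) := by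
    apply Finset.filter_congr
    intro n _
    simp [isUnit_cast_iff w hw n]
  rw [hcongr]
  have hcr : (Finset.range (2^w)).card = 2^w := Finset.card_range _
  have : 2^(w-1) + 2^(w-1) = 2^w := by
    have : 2 * 2^(w-1) = 2^w := by rw [← pow_succ']; congr 1; omega
    omega
  omega

lemma two_not_unit (w : ℕ) (hw : 1 ≤ w) : ¬ IsUnit (2 : ZMod (2^w)) := by
  have : ((2 : ℕ) : ZMod (2^w)) = (2 : ZMod (2^w)) := by push_cast; ring
  rw [← this, isUnit_cast_iff w hw]
  simp

lemma not_isUnit_exists (w : ℕ) (hw : 1 ≤ w) (x : ZMod (2^w)) (h : ¬ IsUnit x) :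
    ∃ y : ZMod (2^w), x = 2 * y ∧ 2 * y.val = x.val := by
  haveI : NeZero (2^w) := ⟨by positivity⟩
  have hx : ¬ IsUnit ((x.val : ℕ) : ZMod (2^w)) := by rwa [ZMod.natCast_zmod_val]
  rw [isUnit_cast_iff w hw] at hx
  push_neg at hx
  obtain ⟨m, hm⟩ := hx
  refine ⟨((m : ℕ) : ZMod (2^w)), ?_, ?_⟩
  · rw [← ZMod.natCast_zmod_val x, hm]
    push_cast; ring
  · have hmlt : m < 2^w := by
      have := ZMod.val_lt x
      omega
    rw [ZMod.val_cast_of_lt hmlt]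
    omega




lemma decomp_aux (w : ℕ) (hw : 1 ≤ w) :
    ∀ n : ℕ, ∀ v : Fin 2 → ZMod (2^w), (v 0).val + (v 1).val = n → v ≠ 0 →
      ∃ k : ℕ, ∃ v' : Fin 2 → ZMod (2^w),
        (IsUnit (v' 0) ∨ IsUnit (v' 1)) ∧ ∀ i, v i = 2^k * v' i := by
  intro n
  induction n using Nat.strong_induction_on with
  | _ n ih =>
    intro v hn hv
    haveI : NeZero (2^w) := ⟨by positivity⟩
    by_cases hprim : IsUnit (v 0) ∨ IsUnit (v 1)
    · exact ⟨0, v, hprim, fun i => by simp⟩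
    · push_neg at hprim
      obtain ⟨y0, hy0, hy0v⟩ := not_isUnit_exists w hw (v 0) hprim.1
      obtain ⟨y1, hy1, hy1v⟩ := not_isUnit_exists w hw (v 1) hprim.2
      set y : Fin 2 → ZMod (2^w) := ![y0, y1] with hy
      have hyi : ∀ i, v i = 2 * y i := by
        intro i
        fin_cases i <;> simpa [hy]
      have hyne : y ≠ 0 := by
        intro h0
        apply hv
        funext i
        rw [hyi i, h0]
        simp
      have hnpos : 0 < n := by
        by_contra h
        push_neg at h
        apply hv
        have h0 : (v 0).val = 0 ∧ (v 1).val = 0 := by omega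
        funext i
        fin_cases i
        · exact (ZMod.val_eq_zero _).mp h0.1
        · exact (ZMod.val_eq_zero _).mp h0.2
      have hsum : (y 0).val + (y 1).val < n := by
        have e0 : y 0 = y0 := by simp [hy]
        have e1 : y 1 = y1 := by simp [hy]
        rw [e0, e1]
        omega
      obtain ⟨k, v', hprim', hdec⟩ := ih _ hsum y rfl hyne
      refine ⟨k + 1, v', hprim', fun i => ?_⟩
      rw [hyi i, hdec i, pow_succ]
      ring

lemma decomp (w : ℕ) (hw : 1 ≤ w) (v : Fin 2 → ZMod (2^w)) (hv : v ≠ 0) :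
    ∃ k : ℕ, k < w ∧ ∃ v' : Fin 2 → ZMod (2^w),
      (IsUnit (v' 0) ∨ IsUnit (v' 1)) ∧ ∀ i, v i = 2^k * v' i := by
  obtain ⟨k, v', hprim, hdec⟩ := decomp_aux w hw _ v rfl hv
  refine ⟨k, ?_, v', hprim, hdec⟩
  by_contra hk
  push_neg at hk
  apply hv
  have h2k : (2 : ZMod (2^w))^k = 0 := by
    have : ((2^k : ℕ) : ZMod (2^w)) = 0 := by
      rw [ZMod.natCast_eq_zero_iff]
      exact pow_dvd_pow 2 hk
    rwa [Nat.cast_pow, Nat.cast_ofNat] at this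
  funext i
  rw [hdec i, h2k]
  simp

-- kernel structure
lemma ker_dvd (w k : ℕ) (hk : k ≤ w) (y : ZMod (2^w)) (h : y * 2^k = 0) :
    2^(w-k) ∣ y.val := by
  haveI : NeZero (2^w) := ⟨by positivity⟩
  have h1 : ((y.val * 2^k : ℕ) : ZMod (2^w)) = 0 := by
    push_cast
    rw [ZMod.natCast_zmod_val]
    exact h
  rw [ZMod.natCast_eq_zero_iff] at h1
  have h2 : 2^(w-k) * 2^k ∣ y.val * 2^k := by
    rwa [← pow_add, Nat.sub_add_cancel hk]
  exact (mul_dvd_mul_iff_right (by positivity : (2:ℕ)^k ≠ 0)).mp h2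

lemma ker_struct (w k : ℕ) (hk : k ≤ w) (y : ZMod (2^w)) (h : y * 2^k = 0) :
    ∃ z : ZMod (2^w), y = 2^(w-k) * z := by
  haveI : NeZero (2^w) := ⟨by positivity⟩
  obtain ⟨m, hm⟩ := ker_dvd w k hk y h
  refine ⟨((m : ℕ) : ZMod (2^w)), ?_⟩
  rw [← ZMod.natCast_zmod_val y, hm]
  push_cast
  ring

lemma card_scalar_fiber (w k : ℕ) (hk : k ≤ w) (t : ZMod (2^w)) :
    (Finset.univ.filter (fun x : ZMod (2^w) => x * 2^k = t)).card ≤ 2^k := by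
  haveI : NeZero (2^w) := ⟨by positivity⟩
  by_cases hne : (Finset.univ.filter (fun x : ZMod (2^w) => x * 2^k = t)).Nonempty
  · obtain ⟨x0, hx0⟩ := hne
    simp only [mem_filter, mem_univ, true_and] at hx0
    have hcard : (Finset.univ.filter (fun y : ZMod (2^w) => 2^(w-k) ∣ y.val)).card = 2^k := by
      rw [card_filter_zmod]
      have hcongr : (Finset.range (2^w)).filter (fun n => 2^(w-k) ∣ ((n : ℕ) : ZMod (2^w)).val)
          = (Finset.range (2^w)).filter (fun n => 2^(w-k) ∣ n) := by
        apply Finset.filter_congr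
        intro n hn
        simp only [mem_range] at hn
        rw [ZMod.val_cast_of_lt hn]
      rw [hcongr]
      have hpow : 2^(w-k) * 2^k = 2^w := by
        rw [← pow_add]
        congr 1
        omega
      rw [← hpow]
      exact card_range_filter_dvd _ _ (by positivity)
    calc (Finset.univ.filter (fun x : ZMod (2^w) => x * 2^k = t)).card
        ≤ (Finset.univ.filter (fun y : ZMod (2^w) => 2^(w-k) ∣ y.val)).card := by
          apply Finset.card_le_card_of_injOn (fun x => x - x0)
          · intro x hx
            simp only [mem_coe, mem_filter, mem_univ, true_and] at *
            apply ker_dvd w k hk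
            rw [sub_mul, hx, hx0, sub_self]
          · intro a _ b _ hab
            simpa using hab
      _ = 2^k := hcard
  · rw [Finset.not_nonempty_iff_eq_empty] at hne
    simp [hne]




lemma fiber_card (w : ℕ) (c0 c1 : ZMod (2^w)) (hc : IsUnit c0 ∨ IsUnit c1) (t : ZMod (2^w)) :
    (Finset.univ.filter fun p : ZMod (2^w) × ZMod (2^w) => c0 * p.2 - c1 * p.1 = t).card
      = 2^w := by
  haveI : NeZero (2^w) := ⟨by positivity⟩
  have hcard : (Finset.univ : Finset (ZMod (2^w))).card = 2^w := by
    rw [Finset.card_univ, ZMod.card]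
  refine Eq.trans ?_ hcard
  rcases hc with h | h
  · obtain ⟨u, hu⟩ := h
    refine Finset.card_nbij' (i := fun p => p.1) (j := fun x => (x, (↑u⁻¹ : ZMod (2^w)) * (t + c1 * x)))
      (fun p _ => Finset.mem_univ _) ?_ ?_ (fun x _ => rfl)
    · intro x _
      simp only [mem_coe, mem_filter, mem_univ, true_and]
      have h1 : c0 * ((↑u⁻¹ : ZMod (2^w)) * (t + c1 * x)) = (c0 * ↑u⁻¹) * (t + c1 * x) := by ring
      have h2 : c0 * (↑u⁻¹ : ZMod (2^w)) = 1 := by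
        rw [← hu]
        exact_mod_cast u.mul_inv
    
      rw [h1, h2, one_mul]
      ring
    · intro p hp
      simp only [mem_coe, mem_filter, mem_univ, true_and] at hp
      have : (↑u⁻¹ : ZMod (2^w)) * (t + c1 * p.1) = p.2 := by
        rw [← hp]
        have h2 : (↑u⁻¹ : ZMod (2^w)) * c0 = 1 := by
          rw [← hu]
          exact_mod_cast u.inv_mul
        calc (↑u⁻¹ : ZMod (2^w)) * (c0 * p.2 - c1 * p.1 + c1 * p.1)
            = ((↑u⁻¹ : ZMod (2^w)) * c0) * p.2 := by ring
          _ = p.2 := by rw [h2, one_mul]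
      exact Prod.ext rfl this
  · obtain ⟨u, hu⟩ := h
    refine Finset.card_nbij' (i := fun p => p.2) (j := fun x => ((↑u⁻¹ : ZMod (2^w)) * (c0 * x - t), x))
      (fun p _ => Finset.mem_univ _) ?_ ?_ (fun x _ => rfl)
    · intro x _
      simp only [mem_coe, mem_filter, mem_univ, true_and]
      have h2 : c1 * (↑u⁻¹ : ZMod (2^w)) = 1 := by
        rw [← hu]
        exact_mod_cast u.mul_inv
      calc c0 * x - c1 * ((↑u⁻¹ : ZMod (2^w)) * (c0 * x - t))
          = c0 * x - (c1 * (↑u⁻¹ : ZMod (2^w))) * (c0 * x - t) := by ring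
        _ = c0 * x - 1 * (c0 * x - t) := by rw [h2]
        _ = t := by ring
    · intro p hp
      simp only [mem_coe, mem_filter, mem_univ, true_and] at hp
      have h2 : (↑u⁻¹ : ZMod (2^w)) * c1 = 1 := by
        rw [← hu]
        exact_mod_cast u.inv_mul
      have : (↑u⁻¹ : ZMod (2^w)) * (c0 * p.2 - t) = p.1 := by
        rw [← hp]
        calc (↑u⁻¹ : ZMod (2^w)) * (c0 * p.2 - (c0 * p.2 - c1 * p.1))
            = ((↑u⁻¹ : ZMod (2^w)) * c1) * p.1 := by ring
          _ = p.1 := by rw [h2, one_mul]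
      exact Prod.ext this rfl

lemma row_count (w : ℕ) (hw : 1 ≤ w) (c0 c1 : ZMod (2^w)) (hc : IsUnit c0 ∨ IsUnit c1) :
    (Finset.univ.filter fun p : ZMod (2^w) × ZMod (2^w) => IsUnit (c0 * p.2 - c1 * p.1)).card
      = 2^(w-1) * 2^w := by
  classical
  rw [Finset.card_eq_sum_card_fiberwise
    (f := fun p : ZMod (2^w) × ZMod (2^w) => c0 * p.2 - c1 * p.1)
    (t := Finset.univ.filter (fun x : ZMod (2^w) => IsUnit x))
    (fun p hp => by simp only [mem_coe, mem_filter, mem_univ, true_and] at *; exact hp)]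
  have hterm : ∀ t ∈ Finset.univ.filter (fun x : ZMod (2^w) => IsUnit x),
      ((Finset.univ.filter fun p : ZMod (2^w) × ZMod (2^w) => IsUnit (c0 * p.2 - c1 * p.1)).filter
        (fun p => c0 * p.2 - c1 * p.1 = t)).card = 2^w := by
    intro t ht
    simp only [mem_filter, mem_univ, true_and] at ht
    rw [Finset.filter_filter]
    have : ∀ p : ZMod (2^w) × ZMod (2^w),
        (IsUnit (c0 * p.2 - c1 * p.1) ∧ c0 * p.2 - c1 * p.1 = t) ↔ (c0 * p.2 - c1 * p.1 = t) := by
      intro p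
      constructor
      · exact fun h => h.2
      · intro h; exact ⟨h ▸ ht, h⟩
    rw [Finset.filter_congr (fun p _ => this p)]
    exact fiber_card w c0 c1 hc t
  rw [Finset.sum_congr rfl hterm, Finset.sum_const, card_units_zmod w hw, smul_eq_mul]

lemma row_count_zero (w : ℕ) (hw : 1 ≤ w) (c0 c1 : ZMod (2^w))
    (h0 : ¬ IsUnit c0) (h1 : ¬ IsUnit c1) :
    (Finset.univ.filter fun p : ZMod (2^w) × ZMod (2^w) => IsUnit (c0 * p.2 - c1 * p.1)).card
      = 0 := by
  rw [Finset.card_eq_zero, Finset.filter_eq_empty_iff]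
  intro p _
  obtain ⟨a, ha, -⟩ := not_isUnit_exists w hw c0 h0
  obtain ⟨b, hb, -⟩ := not_isUnit_exists w hw c1 h1
  intro hunit
  apply two_not_unit w hw
  have : c0 * p.2 - c1 * p.1 = 2 * (a * p.2 - b * p.1) := by rw [ha, hb]; ring
  rw [this] at hunit
  exact isUnit_of_mul_isUnit_left hunit

lemma row_count_le (w : ℕ) (hw : 1 ≤ w) (c0 c1 : ZMod (2^w)) :
    (Finset.univ.filter fun p : ZMod (2^w) × ZMod (2^w) => IsUnit (c0 * p.2 - c1 * p.1)).card
      ≤ 2^(w-1) * 2^w := by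
  by_cases hc : IsUnit c0 ∨ IsUnit c1
  · exact le_of_eq (row_count w hw c0 c1 hc)
  · push_neg at hc
    rw [row_count_zero w hw c0 c1 hc.1 hc.2]
    positivity

lemma matrix_fubini (w : ℕ) (Q : Matrix (Fin 2) (Fin 2) (ZMod (2^w)) → Prop) [DecidablePred Q] :
    (Finset.univ.filter Q).card
      = ∑ c : ZMod (2^w) × ZMod (2^w),
          (Finset.univ.filter fun M => Q M ∧ (M 0 0, M 1 0) = c).card := by
  classical
  rw [Finset.card_eq_sum_card_fiberwise
    (f := fun M : Matrix (Fin 2) (Fin 2) (ZMod (2^w)) => (M 0 0, M 1 0))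
    (t := Finset.univ) (fun M _ => Finset.mem_univ _)]
  apply Finset.sum_congr rfl
  intro c _
  rw [Finset.filter_filter]

lemma card_matrix_fiber (w : ℕ) (c : ZMod (2^w) × ZMod (2^w)) :
    (Finset.univ.filter fun M : Matrix (Fin 2) (Fin 2) (ZMod (2^w)) =>
        IsUnit M.det ∧ (M 0 0, M 1 0) = c).card
      = (Finset.univ.filter fun p : ZMod (2^w) × ZMod (2^w) =>
          IsUnit (c.1 * p.2 - c.2 * p.1)).card := by
  classical
  refine Finset.card_nbij' (i := fun M => (M 0 1, M 1 1))
    (j := fun p => !![c.1, p.1; c.2, p.2]) ?_ ?_ ?_ ?_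
  · intro M hM
    simp only [mem_coe, mem_filter, mem_univ, true_and] at *
    obtain ⟨hdet, hc⟩ := hM
    rw [Matrix.det_fin_two] at hdet
    have h1 : M 0 0 = c.1 := by rw [← hc]
    have h2 : M 1 0 = c.2 := by rw [← hc]
    rw [h1, h2] at hdet
    convert hdet using 2
    ring
  · intro p hp
    simp only [mem_coe, mem_filter, mem_univ, true_and] at *
    constructor
    · rw [Matrix.det_fin_two_of]
      convert hp using 2
      ring
    · simp
  · intro M hM
    simp only [mem_coe, mem_filter, mem_univ, true_and] at hM
    obtain ⟨-, hc⟩ := hM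
    have h1 : M 0 0 = c.1 := by rw [← hc]
    have h2 : M 1 0 = c.2 := by rw [← hc]
    rw [← h1, ← h2]
    exact (Matrix.eta_fin_two M).symm
  · intro p _
    simp

lemma prim_count (w : ℕ) (hw : 1 ≤ w) :
    (Finset.univ.filter fun c : ZMod (2^w) × ZMod (2^w) => IsUnit c.1 ∨ IsUnit c.2).card
      = 2^w * 2^w - 2^(w-1) * 2^(w-1) := by
  classical
  haveI : NeZero (2^w) := ⟨by positivity⟩
  have htot : (Finset.univ : Finset (ZMod (2^w) × ZMod (2^w))).card = 2^w * 2^w := by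
    rw [Finset.card_univ, Fintype.card_prod, ZMod.card]
  have hneg : (Finset.univ.filter fun c : ZMod (2^w) × ZMod (2^w) =>
      ¬ (IsUnit c.1 ∨ IsUnit c.2)).card = 2^(w-1) * 2^(w-1) := by
    have hcongr : (Finset.univ.filter fun c : ZMod (2^w) × ZMod (2^w) =>
        ¬ (IsUnit c.1 ∨ IsUnit c.2))
        = (Finset.univ ×ˢ Finset.univ).filter fun c : ZMod (2^w) × ZMod (2^w) =>
          (¬ IsUnit c.1) ∧ (¬ IsUnit c.2) := by
      rw [Finset.univ_product_univ]
      apply Finset.filter_congr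
      intro c _
      simp [not_or]
    rw [hcongr, Finset.filter_product (fun a : ZMod (2^w) => ¬ IsUnit a) (fun a : ZMod (2^w) => ¬ IsUnit a), Finset.card_product]
    have hnu : (Finset.univ.filter fun x : ZMod (2^w) => ¬ IsUnit x).card = 2^(w-1) := by
      have := Finset.card_filter_add_card_filter_not
        (s := (Finset.univ : Finset (ZMod (2^w)))) (p := fun x => IsUnit x)
      rw [card_units_zmod w hw, Finset.card_univ, ZMod.card] at this
      have hpow : 2^(w-1) + 2^(w-1) = 2^w := by
        have : 2 * 2^(w-1) = 2^w := by rw [← pow_succ']; congr 1; omega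
        omega
      omega
    rw [hnu]
  have := Finset.card_filter_add_card_filter_not
    (s := (Finset.univ : Finset (ZMod (2^w) × ZMod (2^w))))
    (p := fun c => IsUnit c.1 ∨ IsUnit c.2)
  omega

lemma G_card (w : ℕ) (hw : 1 ≤ w) :
    (Finset.univ.filter fun M : Matrix (Fin 2) (Fin 2) (ZMod (2^w)) => IsUnit M.det).card
      = (2^w * 2^w - 2^(w-1) * 2^(w-1)) * (2^(w-1) * 2^w) := by
  classical
  rw [matrix_fubini w (fun M => IsUnit M.det)]
  have hterm : ∀ c : ZMod (2^w) × ZMod (2^w),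
      (Finset.univ.filter fun M : Matrix (Fin 2) (Fin 2) (ZMod (2^w)) =>
        IsUnit M.det ∧ (M 0 0, M 1 0) = c).card
      = if (IsUnit c.1 ∨ IsUnit c.2) then 2^(w-1) * 2^w else 0 := by
    intro c
    rw [card_matrix_fiber]
    by_cases hc : IsUnit c.1 ∨ IsUnit c.2
    · rw [if_pos hc]
      exact row_count w hw c.1 c.2 hc
    · rw [if_neg hc]
      push_neg at hc
      exact row_count_zero w hw c.1 c.2 hc.1 hc.2
  rw [Finset.sum_congr rfl (fun c _ => hterm c), Finset.sum_ite, Finset.sum_const,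
    Finset.sum_const_zero, add_zero, smul_eq_mul, prim_count w hw]




lemma card_mulVec_change (w : ℕ) (v v' : Fin 2 → ZMod (2^w))
    (B : Matrix (Fin 2) (Fin 2) (ZMod (2^w))) (hB : IsUnit B.det)
    (hBv : B.mulVec v' = v) (u : Fin 2 → ZMod (2^w)) :
    (Finset.univ.filter fun M : Matrix (Fin 2) (Fin 2) (ZMod (2^w)) =>
        IsUnit M.det ∧ M.mulVec v = u).card
      = (Finset.univ.filter fun N : Matrix (Fin 2) (Fin 2) (ZMod (2^w)) =>
          IsUnit N.det ∧ N.mulVec v' = u).card := by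
  classical
  have hinv : B⁻¹.mulVec v = v' := by
    rw [← hBv, Matrix.mulVec_mulVec, Matrix.nonsing_inv_mul B hB, Matrix.one_mulVec]
  refine Finset.card_nbij' (i := fun N => N * B) (j := fun M => M * B⁻¹) ?_ ?_ ?_ ?_
  · intro N hN
    simp only [mem_coe, mem_filter, mem_univ, true_and] at *
    obtain ⟨hdet, hmv⟩ := hN
    refine ⟨by rw [Matrix.det_mul]; exact hdet.mul hB, ?_⟩
    rw [← Matrix.mulVec_mulVec, hBv, hmv]
  · intro M hM
    simp only [mem_coe, mem_filter, mem_univ, true_and] at *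
    obtain ⟨hdet, hmv⟩ := hM
    refine ⟨by rw [Matrix.det_mul]; exact hdet.mul (Matrix.isUnit_nonsing_inv_det B hB), ?_⟩
    rw [← Matrix.mulVec_mulVec, hinv, hmv]
  · intro N _
    exact Matrix.mul_nonsing_inv_cancel_right (A := B) N hB
  · intro M _
    exact Matrix.nonsing_inv_mul_cancel_right (A := B) M hB

lemma exists_B (w k : ℕ) (v v' : Fin 2 → ZMod (2^w))
    (hprim : IsUnit (v' 0) ∨ IsUnit (v' 1)) (hdec : ∀ i, v i = 2^k * v' i) :
    ∃ B : Matrix (Fin 2) (Fin 2) (ZMod (2^w)), IsUnit B.det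
      ∧ B.mulVec ![(2 : ZMod (2^w))^k, 0] = v := by
  rcases hprim with h | h
  · refine ⟨!![v' 0, 0; v' 1, 1], ?_, ?_⟩
    · rw [Matrix.det_fin_two_of]
      simpa using h
    · funext i
      fin_cases i <;>
        simp [Matrix.mulVec, dotProduct, Fin.sum_univ_two, hdec 0, hdec 1, mul_comm]
  · refine ⟨!![v' 0, 1; v' 1, 0], ?_, ?_⟩
    · rw [Matrix.det_fin_two_of]
      simpa using h.neg
    · funext i
      fin_cases i <;>
        simp [Matrix.mulVec, dotProduct, Fin.sum_univ_two, hdec 0, hdec 1, mul_comm]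

lemma cnt'_bound (w : ℕ) (hw : 1 ≤ w) (k : ℕ) (hk : k ≤ w) (u : Fin 2 → ZMod (2^w)) :
    (Finset.univ.filter fun N : Matrix (Fin 2) (Fin 2) (ZMod (2^w)) =>
        IsUnit N.det ∧ N.mulVec ![(2 : ZMod (2^w))^k, 0] = u).card
      ≤ if (∃ c : ZMod (2^w) × ZMod (2^w), (IsUnit c.1 ∨ IsUnit c.2)
            ∧ c.1 * 2^k = u 0 ∧ c.2 * 2^k = u 1)
        then (2^k * 2^k) * (2^(w-1) * 2^w) else 0 := by
  classical
  have hmv : ∀ M : Matrix (Fin 2) (Fin 2) (ZMod (2^w)),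
      M.mulVec ![(2 : ZMod (2^w))^k, 0] = u ↔ (M 0 0 * 2^k = u 0 ∧ M 1 0 * 2^k = u 1) := by
    intro M
    rw [funext_iff, Fin.forall_fin_two]
    have e : ∀ i : Fin 2, M.mulVec ![(2 : ZMod (2^w))^k, 0] i = M i 0 * 2^k := by
      intro i
      simp [Matrix.mulVec, dotProduct, Fin.sum_univ_two]
    rw [e 0, e 1]
  rw [matrix_fubini]
  have hfib : ∀ c : ZMod (2^w) × ZMod (2^w),
      (Finset.univ.filter fun M : Matrix (Fin 2) (Fin 2) (ZMod (2^w)) =>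
        (IsUnit M.det ∧ M.mulVec ![(2 : ZMod (2^w))^k, 0] = u) ∧ (M 0 0, M 1 0) = c).card
      = if (c.1 * 2^k = u 0 ∧ c.2 * 2^k = u 1)
        then (Finset.univ.filter fun p : ZMod (2^w) × ZMod (2^w) =>
          IsUnit (c.1 * p.2 - c.2 * p.1)).card
        else 0 := by
    intro c
    by_cases hcond : c.1 * 2^k = u 0 ∧ c.2 * 2^k = u 1
    · rw [if_pos hcond, ← card_matrix_fiber]
      congr 1
      apply Finset.filter_congr
      intro M _
      simp only [hmv M]
      constructor
      · rintro ⟨⟨h1, -⟩, h3⟩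
        exact ⟨h1, h3⟩
      · rintro ⟨h1, h3⟩
        have e1 : M 0 0 = c.1 := by rw [← h3]
        have e2 : M 1 0 = c.2 := by rw [← h3]
        exact ⟨⟨h1, by rw [e1, e2]; exact hcond⟩, h3⟩
    · rw [if_neg hcond, Finset.card_eq_zero, Finset.filter_eq_empty_iff]
      rintro M - ⟨⟨-, hMv⟩, h3⟩
      apply hcond
      rw [hmv M] at hMv
      have e1 : M 0 0 = c.1 := by rw [← h3]
      have e2 : M 1 0 = c.2 := by rw [← h3]
      rw [← e1, ← e2]
      exact hMv
  rw [Finset.sum_congr rfl (fun c _ => hfib c)]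
  by_cases horb : ∃ c : ZMod (2^w) × ZMod (2^w), (IsUnit c.1 ∨ IsUnit c.2)
      ∧ c.1 * 2^k = u 0 ∧ c.2 * 2^k = u 1
  · rw [if_pos horb, Finset.sum_ite, Finset.sum_const_zero, add_zero]
    calc ∑ c ∈ Finset.univ.filter (fun c : ZMod (2^w) × ZMod (2^w) =>
            c.1 * 2^k = u 0 ∧ c.2 * 2^k = u 1),
          (Finset.univ.filter fun p : ZMod (2^w) × ZMod (2^w) =>
            IsUnit (c.1 * p.2 - c.2 * p.1)).card
        ≤ ∑ _c ∈ Finset.univ.filter (fun c : ZMod (2^w) × ZMod (2^w) =>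
            c.1 * 2^k = u 0 ∧ c.2 * 2^k = u 1), 2^(w-1) * 2^w := by
          exact Finset.sum_le_sum (fun c _ => row_count_le w hw c.1 c.2)
      _ = (Finset.univ.filter (fun c : ZMod (2^w) × ZMod (2^w) =>
            c.1 * 2^k = u 0 ∧ c.2 * 2^k = u 1)).card * (2^(w-1) * 2^w) := by
          rw [Finset.sum_const, smul_eq_mul]
      _ ≤ (2^k * 2^k) * (2^(w-1) * 2^w) := by
          apply Nat.mul_le_mul_right
          have heq : (Finset.univ.filter (fun c : ZMod (2^w) × ZMod (2^w) =>
              c.1 * 2^k = u 0 ∧ c.2 * 2^k = u 1))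
              = (Finset.univ.filter (fun x : ZMod (2^w) => x * 2^k = u 0))
                ×ˢ (Finset.univ.filter (fun x : ZMod (2^w) => x * 2^k = u 1)) := by
            rw [← Finset.filter_product (fun x : ZMod (2^w) => x * 2^k = u 0)
              (fun x : ZMod (2^w) => x * 2^k = u 1), Finset.univ_product_univ]
          rw [heq, Finset.card_product]
          exact Nat.mul_le_mul (card_scalar_fiber w k hk (u 0)) (card_scalar_fiber w k hk (u 1))
  · rw [if_neg horb]
    apply le_of_eq
    apply Finset.sum_eq_zero
    intro c _
    by_cases hcond : c.1 * 2^k = u 0 ∧ c.2 * 2^k = u 1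
    · rw [if_pos hcond]
      apply row_count_zero w hw
      · intro hu; exact horb ⟨c, Or.inl hu, hcond⟩
      · intro hu; exact horb ⟨c, Or.inr hu, hcond⟩
    · rw [if_neg hcond]




lemma sq_helper (a b : ℕ) (hab : a = 2*b ∨ a = 2*b+1) :
    (2*a+1)*(2*a+1) ≤ 8*(a*a) + (2*b+1)*(2*b+1) := by
  rcases hab with rfl | rfl
  · rcases Nat.eq_zero_or_pos b with rfl | hb
    · norm_num
    · have h1 : b ≤ b*b := Nat.le_mul_of_pos_left b hb
      nlinarith
  · nlinarith

lemma final_arith (mN k C : ℕ) (hmC : mN * 2^k ≤ C) :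
    ((2*mN+1)*(2*mN+1) - (2*(mN/2)+1)*(2*(mN/2)+1)) * (2^k*2^k) ≤ 8 * C^2 := by
  have hd : mN = 2*(mN/2) ∨ mN = 2*(mN/2)+1 := by omega
  have h' := sq_helper mN (mN/2) hd
  have hstep : (2*mN+1)*(2*mN+1) - (2*(mN/2)+1)*(2*(mN/2)+1) ≤ 8*(mN*mN) := by
    rw [Nat.sub_le_iff_le_add]
    calc (2*mN+1)*(2*mN+1) ≤ 8*(mN*mN) + (2*(mN/2)+1)*(2*(mN/2)+1) := h'
      _ = 8*(mN*mN) + (2*(mN/2)+1)*(2*(mN/2)+1) := rfl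
  calc ((2*mN+1)*(2*mN+1) - (2*(mN/2)+1)*(2*(mN/2)+1)) * (2^k*2^k)
      ≤ 8*(mN*mN) * (2^k*2^k) := Nat.mul_le_mul_right _ hstep
    _ = 8 * ((mN*2^k) * (mN*2^k)) := by ring
    _ ≤ 8 * (C*C) := Nat.mul_le_mul_left 8 (Nat.mul_le_mul hmC hmC)
    _ = 8 * C^2 := by ring

-- number of even integers in [-m, m]
lemma card_Icc_even (mN : ℕ) :
    ((Finset.Icc (-(mN:ℤ)) (mN:ℤ)).filter (fun z => 2 ∣ z)).card = 2 * (mN / 2) + 1 := by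
  have heq : (Finset.Icc (-(mN:ℤ)) (mN:ℤ)).filter (fun z => 2 ∣ z)
      = (Finset.Icc (-((mN/2 : ℕ):ℤ)) ((mN/2 : ℕ):ℤ)).image (fun a => 2 * a) := by
    ext z
    simp only [mem_filter, mem_Icc, mem_image]
    have hm : (mN : ℤ) = 2 * ((mN/2 : ℕ):ℤ) + (mN % 2 : ℕ) := by
      push_cast
      omega
    constructor
    · rintro ⟨⟨h1, h2⟩, b, rfl⟩
      exact ⟨b, by omega, by ring⟩
    · rintro ⟨a, ⟨h1, h2⟩, rfl⟩
      exact ⟨by omega, ⟨a, by ring⟩⟩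
  rw [heq, Finset.card_image_of_injective _ (fun a b h => by omega), Int.card_Icc]
  omega

lemma card_Icc_int (mN : ℕ) : (Finset.Icc (-(mN:ℤ)) (mN:ℤ)).card = 2 * mN + 1 := by
  rw [Int.card_Icc]
  omega

-- the integer box set
lemma card_F (mN : ℕ) :
    (((Finset.Icc (-(mN:ℤ)) (mN:ℤ)) ×ˢ (Finset.Icc (-(mN:ℤ)) (mN:ℤ))).filter
        (fun p : ℤ × ℤ => ¬(2 ∣ p.1 ∧ 2 ∣ p.2))).card
      = (2 * mN + 1) * (2 * mN + 1) - (2 * (mN/2) + 1) * (2 * (mN/2) + 1) := by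
  classical
  have hsplit := Finset.card_filter_add_card_filter_not
    (s := (Finset.Icc (-(mN:ℤ)) (mN:ℤ)) ×ˢ (Finset.Icc (-(mN:ℤ)) (mN:ℤ)))
    (p := fun p : ℤ × ℤ => 2 ∣ p.1 ∧ 2 ∣ p.2)
  have hpos : (((Finset.Icc (-(mN:ℤ)) (mN:ℤ)) ×ˢ (Finset.Icc (-(mN:ℤ)) (mN:ℤ))).filter
      (fun p : ℤ × ℤ => 2 ∣ p.1 ∧ 2 ∣ p.2)).card = (2 * (mN/2) + 1) * (2 * (mN/2) + 1) := by
    rw [Finset.filter_product (fun z : ℤ => 2 ∣ z) (fun z : ℤ => 2 ∣ z), Finset.card_product,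
      card_Icc_even]
  have htot : ((Finset.Icc (-(mN:ℤ)) (mN:ℤ)) ×ˢ (Finset.Icc (-(mN:ℤ)) (mN:ℤ))).card
      = (2 * mN + 1) * (2 * mN + 1) := by
    rw [Finset.card_product, card_Icc_int]
  have hcongr : (((Finset.Icc (-(mN:ℤ)) (mN:ℤ)) ×ˢ (Finset.Icc (-(mN:ℤ)) (mN:ℤ))).filter
      (fun p : ℤ × ℤ => ¬(2 ∣ p.1 ∧ 2 ∣ p.2))).card
      = (((Finset.Icc (-(mN:ℤ)) (mN:ℤ)) ×ˢ (Finset.Icc (-(mN:ℤ)) (mN:ℤ))).filter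
        (fun p : ℤ × ℤ => ¬((fun p : ℤ × ℤ => 2 ∣ p.1 ∧ 2 ∣ p.2) p))).card := rfl
  omega

-- main counting lemma for the box-orbit set
open Classical in
lemma card_B_bound (w k C : ℕ) (hw : 1 ≤ w) (hk : k < w) (h2C : 2 * C < 2^w) :
    (Finset.univ.filter (fun u : Fin 2 → ZMod (2^w) =>
        (∀ i, ∃ z : ℤ, z.natAbs ≤ C ∧ (z : ZMod (2^w)) = u i)
        ∧ ∃ c : ZMod (2^w) × ZMod (2^w), (IsUnit c.1 ∨ IsUnit c.2)
            ∧ c.1 * 2^k = u 0 ∧ c.2 * 2^k = u 1)).card * (2^k * 2^k)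
      ≤ 8 * C^2 := by
  classical
  haveI : NeZero (2^w) := ⟨by positivity⟩
  obtain ⟨mN, hmN⟩ : ∃ m : ℕ, m = C / 2^k := ⟨_, rfl⟩
  -- facts about valMinAbs of members
  have key : ∀ u : Fin 2 → ZMod (2^w),
      ((∀ i, ∃ z : ℤ, z.natAbs ≤ C ∧ (z : ZMod (2^w)) = u i)
        ∧ ∃ c : ZMod (2^w) × ZMod (2^w), (IsUnit c.1 ∨ IsUnit c.2)
            ∧ c.1 * 2^k = u 0 ∧ c.2 * 2^k = u 1) →
      (∀ i, (u i).valMinAbs.natAbs ≤ C ∧ (2^k : ℤ) ∣ (u i).valMinAbs)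
        ∧ ¬((2^(k+1) : ℤ) ∣ (u 0).valMinAbs ∧ (2^(k+1) : ℤ) ∣ (u 1).valMinAbs) := by
    rintro u ⟨hbox, c, hcprim, hc0, hc1⟩
    have hmain : ∀ i, (u i).valMinAbs.natAbs ≤ C ∧ (2^k : ℤ) ∣ (u i).valMinAbs := by
      intro i
      obtain ⟨z, hz, hzu⟩ := hbox i
      have hW : (2:ℤ) * C < 2^w := by exact_mod_cast h2C
      have hmin : (u i).valMinAbs = z := by
        rw [ZMod.valMinAbs_spec]
        refine ⟨hzu.symm, ?_, ?_⟩
        · push_cast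
          omega
        · push_cast
          omega
      constructor
      · rw [hmin]; exact hz
      · -- divisibility
        have hci : ∃ d : ZMod (2^w), d * 2^k = u i := by
          fin_cases i
          · exact ⟨c.1, hc0⟩
          · exact ⟨c.2, hc1⟩
        obtain ⟨d, hd⟩ := hci
        have hcast : (((u i).valMinAbs - (d.val : ℤ) * 2^k : ℤ) : ZMod (2^w)) = 0 := by
          push_cast
          rw [ZMod.natCast_zmod_val, ← hd, sub_self]
        rw [ZMod.intCast_zmod_eq_zero_iff_dvd] at hcast
        have h1 : (2^k : ℤ) ∣ ((u i).valMinAbs - (d.val : ℤ) * 2^k) := by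
          refine dvd_trans ?_ hcast
          have : ((2:ℤ)^w) = 2^k * 2^(w-k) := by
            rw [← pow_add]
            congr 1
            omega
          rw [show ((2^w : ℕ) : ℤ) = (2:ℤ)^w by push_cast; ring, this]
          exact dvd_mul_right _ _
        have h2 : (2^k : ℤ) ∣ (d.val : ℤ) * 2^k := dvd_mul_left _ _
        have := dvd_add h1 h2
        simpa using this
    refine ⟨hmain, ?_⟩
    rintro ⟨⟨b0, hb0⟩, ⟨b1, hb1⟩⟩
    -- both coordinates divisible by 2^(k+1): contradiction with primitivity
    have hbad : ∀ (d : ZMod (2^w)) (i : Fin 2) (b : ℤ), d * 2^k = u i →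
        (u i).valMinAbs = 2^(k+1) * b → ¬ IsUnit d := by
      intro d i b hd hvb hunit
      have hcast : ((((2:ℤ)^(k+1) * b) : ℤ) : ZMod (2^w)) = u i := by
        rw [← hvb, ZMod.coe_valMinAbs]
      have heq : (2 * (b : ZMod (2^w))) * 2^k = u i := by
        rw [← hcast]
        push_cast
        ring
      have hker : (d - 2 * (b : ZMod (2^w))) * 2^k = 0 := by
        rw [sub_mul, hd, heq, sub_self]
      obtain ⟨e, he⟩ := ker_struct w k (le_of_lt hk) _ hker
      have hd2 : d = 2 * ((b : ZMod (2^w)) + 2^(w-k-1) * e) := by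
        have hsub : d = 2 * (b : ZMod (2^w)) + 2^(w-k) * e := by
          have := he
          linear_combination this
        rw [hsub]
        have : (2:ZMod (2^w))^(w-k) = 2 * 2^(w-k-1) := by
          rw [← pow_succ']
          congr 1
          omega
        rw [this]
        ring
      rw [hd2] at hunit
      exact two_not_unit w hw (isUnit_of_mul_isUnit_left hunit)
    rcases hcprim with h | h
    · exact hbad c.1 0 b0 hc0 hb0 h
    · exact hbad c.2 1 b1 hc1 hb1 h
  -- injection into the integer box
  have hinj : (Finset.univ.filter (fun u : Fin 2 → ZMod (2^w) =>
        (∀ i, ∃ z : ℤ, z.natAbs ≤ C ∧ (z : ZMod (2^w)) = u i)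
        ∧ ∃ c : ZMod (2^w) × ZMod (2^w), (IsUnit c.1 ∨ IsUnit c.2)
            ∧ c.1 * 2^k = u 0 ∧ c.2 * 2^k = u 1)).card
      ≤ (((Finset.Icc (-(mN:ℤ)) (mN:ℤ)) ×ˢ (Finset.Icc (-(mN:ℤ)) (mN:ℤ))).filter
          (fun p : ℤ × ℤ => ¬(2 ∣ p.1 ∧ 2 ∣ p.2))).card := by
    apply Finset.card_le_card_of_injOn
      (fun u => ((u 0).valMinAbs / 2^k, (u 1).valMinAbs / 2^k))
    · intro u hu
      simp only [mem_coe, mem_filter, mem_univ, true_and] at hu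
      obtain ⟨hmain, hpar⟩ := key u hu
      have hmem : ∀ i : Fin 2, (u i).valMinAbs / 2^k ∈ Finset.Icc (-(mN:ℤ)) (mN:ℤ) := by
        intro i
        obtain ⟨hle, b, hb⟩ := hmain i
        rw [hb, Int.mul_ediv_cancel_left _ (by positivity)]
        have hble : 2^k * b.natAbs ≤ C := by
          rw [hb] at hle
          have habs : ((2:ℤ)^k * b).natAbs = 2^k * b.natAbs := by
            rw [Int.natAbs_mul, Int.natAbs_pow]
            norm_num
          rw [habs] at hle
          exact hle
        have : b.natAbs ≤ mN := by
          rw [hmN, Nat.le_div_iff_mul_le (by positivity)]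
          exact (mul_comm (2^k) b.natAbs) ▸ hble
        simp only [mem_Icc]
        omega
      simp only [mem_coe, mem_filter, mem_product]
      refine ⟨⟨hmem 0, hmem 1⟩, ?_⟩
      rintro ⟨hd0, hd1⟩
      apply hpar
      constructor
      · obtain ⟨hle, b, hb⟩ := hmain 0
        rw [hb, Int.mul_ediv_cancel_left _ (by positivity : (2:ℤ)^k ≠ 0)] at hd0
        obtain ⟨e, he⟩ := hd0
        exact ⟨e, by rw [hb, he]; ring⟩
      · obtain ⟨hle, b, hb⟩ := hmain 1
        rw [hb, Int.mul_ediv_cancel_left _ (by positivity : (2:ℤ)^k ≠ 0)] at hd1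
        obtain ⟨e, he⟩ := hd1
        exact ⟨e, by rw [hb, he]; ring⟩
    · intro u hu u' hu' heq
      simp only [coe_filter, Set.mem_setOf_eq, mem_univ, true_and] at hu hu'
      obtain ⟨hmain, -⟩ := key u hu
      obtain ⟨hmain', -⟩ := key u' hu'
      have hz : ∀ i : Fin 2, (u i).valMinAbs = (u' i).valMinAbs := by
        intro i
        obtain ⟨-, b, hb⟩ := hmain i
        obtain ⟨-, b', hb'⟩ := hmain' i
        have h0 : (u 0).valMinAbs / 2^k = (u' 0).valMinAbs / 2^k :=
          congrArg (fun p : ℤ × ℤ => p.1) heq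
        have h1 : (u 1).valMinAbs / 2^k = (u' 1).valMinAbs / 2^k :=
          congrArg (fun p : ℤ × ℤ => p.2) heq
        have hbi : b = b' := by
          have hii : (u i).valMinAbs / 2^k = (u' i).valMinAbs / 2^k := by
            fin_cases i
            · exact h0
            · exact h1
          rw [hb, hb', Int.mul_ediv_cancel_left _ (by positivity : (2:ℤ)^k ≠ 0),
            Int.mul_ediv_cancel_left _ (by positivity : (2:ℤ)^k ≠ 0)] at hii
          exact hii
        rw [hb, hb', hbi]
      funext i
      have h2 := congrArg (fun z : ℤ => ((z : ZMod (2^w)))) (hz i)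
      simpa only [ZMod.coe_valMinAbs] using h2
  -- now the arithmetic
  have hF := card_F mN
  have hfinal : ((2 * mN + 1) * (2 * mN + 1) - (2 * (mN/2) + 1) * (2 * (mN/2) + 1)) * (2^k * 2^k)
      ≤ 8 * C^2 :=
    final_arith mN k C (by rw [hmN]; exact Nat.div_mul_le_self C (2^k))
  calc _ ≤ (((Finset.Icc (-(mN:ℤ)) (mN:ℤ)) ×ˢ (Finset.Icc (-(mN:ℤ)) (mN:ℤ))).filter
          (fun p : ℤ × ℤ => ¬(2 ∣ p.1 ∧ 2 ∣ p.2))).card * (2^k * 2^k) :=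
        Nat.mul_le_mul_right _ hinj
    _ = ((2 * mN + 1) * (2 * mN + 1) - (2 * (mN/2) + 1) * (2 * (mN/2) + 1)) * (2^k * 2^k) := by
        rw [hF]
    _ ≤ 8 * C^2 := hfinal


open Classical in
lemma main_res (w : ℕ) (hw : 1 ≤ w) (C : ℕ) (v : Fin 2 → ZMod (2^w)) (hv : v ≠ 0) :
    ((((Finset.univ.filter fun M : Matrix (Fin 2) (Fin 2) (ZMod (2^w)) => IsUnit M.det).filter
          fun M => ∀ i, ∃ z : ℤ, z.natAbs ≤ C ∧ (z : ZMod (2^w)) = M.mulVec v i).card : ℝ) /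
        ((Finset.univ.filter fun M : Matrix (Fin 2) (Fin 2) (ZMod (2^w)) =>
            IsUnit M.det).card : ℝ))
      ≤ (32 / 3) * (C : ℝ) ^ 2 / (((2^w : ℕ) : ℝ) ^ 2) := by
  classical
  haveI : NeZero (2^w) := ⟨by positivity⟩
  have hGcard := G_card w hw
  have hGpos : 0 < (Finset.univ.filter
      fun M : Matrix (Fin 2) (Fin 2) (ZMod (2^w)) => IsUnit M.det).card := by
    apply Finset.card_pos.mpr
    exact ⟨1, Finset.mem_filter.mpr ⟨Finset.mem_univ _,
      by rw [Matrix.det_one]; exact isUnit_one⟩⟩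
  have hGposR : (0:ℝ) < ((Finset.univ.filter
      fun M : Matrix (Fin 2) (Fin 2) (ZMod (2^w)) => IsUnit M.det).card : ℝ) := by
    exact_mod_cast hGpos
  have hsQ : (0:ℝ) < ((2^w : ℕ) : ℝ)^2 := by positivity
  by_cases hC : 32 * C^2 < 3 * (2^w)^2
  swap
  · push_neg at hC
    have h1 : ((((Finset.univ.filter
          fun M : Matrix (Fin 2) (Fin 2) (ZMod (2^w)) => IsUnit M.det).filter
          fun M => ∀ i, ∃ z : ℤ, z.natAbs ≤ C ∧ (z : ZMod (2^w)) = M.mulVec v i).card : ℝ) /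
        ((Finset.univ.filter fun M : Matrix (Fin 2) (Fin 2) (ZMod (2^w)) =>
            IsUnit M.det).card : ℝ)) ≤ 1 := by
      rw [div_le_one hGposR]
      exact_mod_cast Finset.card_le_card (Finset.filter_subset _ _)
    refine le_trans h1 ?_
    rw [le_div_iff₀ hsQ]
    have h2 : (3:ℝ) * (((2^w : ℕ)):ℝ)^2 ≤ 32 * (C:ℝ)^2 := by exact_mod_cast hC
    linarith
  · have h2C : 2 * C < 2^w := by
      by_contra h
      push_neg at h
      have h4 := Nat.mul_le_mul h h
      nlinarith
    obtain ⟨k, hk, v', hprim, hdec⟩ := decomp w hw v hv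
    obtain ⟨B, hBdet, hBv⟩ := exists_B w k v v' hprim hdec
    -- the ℕ bound on the numerator
    have hA4 : ((Finset.univ.filter
          fun M : Matrix (Fin 2) (Fin 2) (ZMod (2^w)) => IsUnit M.det).filter
          fun M => ∀ i, ∃ z : ℤ, z.natAbs ≤ C ∧ (z : ZMod (2^w)) = M.mulVec v i).card
        ≤ (8 * C^2) * (2^(w-1) * 2^w) := by
      have hA1 : ((Finset.univ.filter
            fun M : Matrix (Fin 2) (Fin 2) (ZMod (2^w)) => IsUnit M.det).filter
            fun M => ∀ i, ∃ z : ℤ, z.natAbs ≤ C ∧ (z : ZMod (2^w)) = M.mulVec v i).card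
          = ∑ u ∈ Finset.univ.filter (fun u : Fin 2 → ZMod (2^w) =>
              ∀ i, ∃ z : ℤ, z.natAbs ≤ C ∧ (z : ZMod (2^w)) = u i),
            (((Finset.univ.filter
              fun M : Matrix (Fin 2) (Fin 2) (ZMod (2^w)) => IsUnit M.det).filter
              fun M => ∀ i, ∃ z : ℤ, z.natAbs ≤ C ∧ (z : ZMod (2^w)) = M.mulVec v i).filter
              (fun M => M.mulVec v = u)).card := by
        apply Finset.card_eq_sum_card_fiberwise
        intro M hM
        simp only [Finset.mem_coe, Finset.mem_filter, Finset.mem_univ, true_and] at *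
        exact hM.2
      have hA2 : ∀ u : Fin 2 → ZMod (2^w),
          (((Finset.univ.filter
            fun M : Matrix (Fin 2) (Fin 2) (ZMod (2^w)) => IsUnit M.det).filter
            fun M => ∀ i, ∃ z : ℤ, z.natAbs ≤ C ∧ (z : ZMod (2^w)) = M.mulVec v i).filter
            (fun M => M.mulVec v = u)).card
          ≤ if (∃ c : ZMod (2^w) × ZMod (2^w), (IsUnit c.1 ∨ IsUnit c.2)
                ∧ c.1 * 2^k = u 0 ∧ c.2 * 2^k = u 1)
            then (2^k * 2^k) * (2^(w-1) * 2^w) else 0 := by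
        intro u
        refine le_trans (le_trans ?_
          (le_of_eq (card_mulVec_change w v (![(2 : ZMod (2^w))^k, 0]) B hBdet hBv u)))
          (cnt'_bound w hw k (le_of_lt hk) u)
        apply Finset.card_le_card
        intro M hM
        simp only [Finset.mem_filter, Finset.mem_univ, true_and] at *
        exact ⟨hM.1.1, hM.2⟩
      rw [hA1]
      calc ∑ u ∈ Finset.univ.filter (fun u : Fin 2 → ZMod (2^w) =>
              ∀ i, ∃ z : ℤ, z.natAbs ≤ C ∧ (z : ZMod (2^w)) = u i),
            (((Finset.univ.filter
              fun M : Matrix (Fin 2) (Fin 2) (ZMod (2^w)) => IsUnit M.det).filter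
              fun M => ∀ i, ∃ z : ℤ, z.natAbs ≤ C ∧ (z : ZMod (2^w)) = M.mulVec v i).filter
              (fun M => M.mulVec v = u)).card
          ≤ ∑ u ∈ Finset.univ.filter (fun u : Fin 2 → ZMod (2^w) =>
              ∀ i, ∃ z : ℤ, z.natAbs ≤ C ∧ (z : ZMod (2^w)) = u i),
            (if (∃ c : ZMod (2^w) × ZMod (2^w), (IsUnit c.1 ∨ IsUnit c.2)
                ∧ c.1 * 2^k = u 0 ∧ c.2 * 2^k = u 1)
              then (2^k * 2^k) * (2^(w-1) * 2^w) else 0) :=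
            Finset.sum_le_sum (fun u _ => hA2 u)
        _ = ∑ u ∈ (Finset.univ.filter (fun u : Fin 2 → ZMod (2^w) =>
              ∀ i, ∃ z : ℤ, z.natAbs ≤ C ∧ (z : ZMod (2^w)) = u i)).filter
              (fun u => ∃ c : ZMod (2^w) × ZMod (2^w), (IsUnit c.1 ∨ IsUnit c.2)
                ∧ c.1 * 2^k = u 0 ∧ c.2 * 2^k = u 1),
            (2^k * 2^k) * (2^(w-1) * 2^w) := (Finset.sum_filter _ _).symm
        _ = ((Finset.univ.filter (fun u : Fin 2 → ZMod (2^w) =>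
              (∀ i, ∃ z : ℤ, z.natAbs ≤ C ∧ (z : ZMod (2^w)) = u i)
              ∧ ∃ c : ZMod (2^w) × ZMod (2^w), (IsUnit c.1 ∨ IsUnit c.2)
                ∧ c.1 * 2^k = u 0 ∧ c.2 * 2^k = u 1)).card)
            * ((2^k * 2^k) * (2^(w-1) * 2^w)) := by
            rw [Finset.sum_const, smul_eq_mul, Finset.filter_filter]
        _ ≤ (8 * C^2) * (2^(w-1) * 2^w) := by
            have hBB := card_B_bound w k C hw hk h2C
            calc ((Finset.univ.filter (fun u : Fin 2 → ZMod (2^w) =>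
                  (∀ i, ∃ z : ℤ, z.natAbs ≤ C ∧ (z : ZMod (2^w)) = u i)
                  ∧ ∃ c : ZMod (2^w) × ZMod (2^w), (IsUnit c.1 ∨ IsUnit c.2)
                    ∧ c.1 * 2^k = u 0 ∧ c.2 * 2^k = u 1)).card)
                * ((2^k * 2^k) * (2^(w-1) * 2^w))
                = ((Finset.univ.filter (fun u : Fin 2 → ZMod (2^w) =>
                  (∀ i, ∃ z : ℤ, z.natAbs ≤ C ∧ (z : ZMod (2^w)) = u i)
                  ∧ ∃ c : ZMod (2^w) × ZMod (2^w), (IsUnit c.1 ∨ IsUnit c.2)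
                    ∧ c.1 * 2^k = u 0 ∧ c.2 * 2^k = u 1)).card * (2^k * 2^k))
                  * (2^(w-1) * 2^w) := by ring
              _ ≤ (8 * C^2) * (2^(w-1) * 2^w) := Nat.mul_le_mul_right _ hBB
    -- real arithmetic
    have hXpos : (0:ℝ) < (2:ℝ)^(w-1) := by positivity
    have h2w : ((2^w : ℕ) : ℝ) = 2 * (2:ℝ)^(w-1) := by
      push_cast
      rw [← pow_succ']
      congr 1
      omega
    have hle : 2^(w-1)*2^(w-1) ≤ 2^w*2^w :=
      Nat.mul_le_mul (Nat.pow_le_pow_right (by norm_num) (by omega))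
        (Nat.pow_le_pow_right (by norm_num) (by omega))
    have hGR : ((Finset.univ.filter
        fun M : Matrix (Fin 2) (Fin 2) (ZMod (2^w)) => IsUnit M.det).card : ℝ)
        = 6 * ((2:ℝ)^(w-1))^4 := by
      rw [hGcard]
      push_cast [hle]
      rw [show ((2:ℝ))^w = 2 * (2:ℝ)^(w-1) from by rw [← pow_succ']; congr 1; omega]
      ring
    have hAR : ((((Finset.univ.filter
          fun M : Matrix (Fin 2) (Fin 2) (ZMod (2^w)) => IsUnit M.det).filter
          fun M => ∀ i, ∃ z : ℤ, z.natAbs ≤ C ∧ (z : ZMod (2^w)) = M.mulVec v i).card : ℝ))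
        ≤ 16 * (C:ℝ)^2 * ((2:ℝ)^(w-1))^2 := by
      calc ((((Finset.univ.filter
            fun M : Matrix (Fin 2) (Fin 2) (ZMod (2^w)) => IsUnit M.det).filter
            fun M => ∀ i, ∃ z : ℤ, z.natAbs ≤ C ∧ (z : ZMod (2^w)) = M.mulVec v i).card : ℝ))
          ≤ (((8 * C^2) * (2^(w-1) * 2^w) : ℕ) : ℝ) := by exact_mod_cast hA4
        _ = 16 * (C:ℝ)^2 * ((2:ℝ)^(w-1))^2 := by
            push_cast
            rw [show ((2:ℝ))^w = 2 * (2:ℝ)^(w-1) from by rw [← pow_succ']; congr 1; omega]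
            ring
    rw [div_le_iff₀ hGposR, hGR]
    calc ((((Finset.univ.filter
          fun M : Matrix (Fin 2) (Fin 2) (ZMod (2^w)) => IsUnit M.det).filter
          fun M => ∀ i, ∃ z : ℤ, z.natAbs ≤ C ∧ (z : ZMod (2^w)) = M.mulVec v i).card : ℝ))
        ≤ 16 * (C:ℝ)^2 * ((2:ℝ)^(w-1))^2 := hAR
      _ = 32 / 3 * (C:ℝ)^2 / (((2^w : ℕ) : ℝ)^2) * (6 * ((2:ℝ)^(w-1))^4) := by
          rw [h2w]
          field_simp
          ring

end Stmt14



/- STATEMENT 14: Let `s = √n` be a power of 2 and let `𝓜` be the set of 2×2 matrices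
over `ℤ_s` with odd determinant (equivalently, invertible determinant, since `s` is a
power of 2).  For any nonzero `v ∈ (ℤ_s)²` and `M` uniform over `𝓜`, the probability
that `Mv ∈ [−C, C]² (mod s)` is at most `(32/3)·C²/n` with `n = s²`. -/

open Classical in
theorem stmt14 (s : ℕ) [NeZero s] (hs : ∃ w : ℕ, s = 2 ^ w) (C : ℕ)
    (v : Fin 2 → ZMod s) (hv : v ≠ 0) :
    ((((Finset.univ.filter fun M : Matrix (Fin 2) (Fin 2) (ZMod s) => IsUnit M.det).filter
          fun M => ∀ i, ∃ z : ℤ, z.natAbs ≤ C ∧ (z : ZMod s) = M.mulVec v i).card : ℝ) /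
        ((Finset.univ.filter fun M : Matrix (Fin 2) (Fin 2) (ZMod s) =>
            IsUnit M.det).card : ℝ))
      ≤ (32 / 3) * (C : ℝ) ^ 2 / ((s : ℝ) ^ 2) := by
  obtain ⟨w, rfl⟩ := hs
  rcases Nat.eq_zero_or_pos w with rfl | hw
  · exfalso
    apply hv
    funext i
    have h2 := ZMod.val_lt (v i)
    have h3 : (v i).val = 0 := by simpa using h2
    have h4 := (ZMod.val_eq_zero (v i)).mp h3
    simpa using h4
  · exact Stmt14.main_res w hw C v hv
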